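/- arXiv:2209.06411 — 2 statements merged into one kernel-verified Lean document; each statement's English description precedes it below -/
import Mathlib

section
/- Let x be a random vector, and let n be noise with coordinates n_i that are mean-zero, pairwise independent, and independent of x. Let J ⊆ {1,…,d} be a fixed index set with complement J^c. Let f be any measurable function of the restricted observation y_J = x_J + n_J. Then E[‖f(y_J) − y_{J^c}‖²] = E[‖f(y_J) − x_{J^c}‖²] + Σ_{i∈J^c} Var(n_i). (Theorem 1 of Noise2SR.) -/
open MeasureTheory ProbabilityTheory

/-- Theorem 1 of Noise2SR: with `y = x + n`, noise coordinates mean-zero,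
pairwise independent, and `n_{Jᶜ}` independent of `(x, n_J)`, for any measurable `f` of the
restricted observation `y_J`,
`E[‖f(y_J) − y_{Jᶜ}‖²] = E[‖f(y_J) − x_{Jᶜ}‖²] + ∑_{i ∈ Jᶜ} Var(n_i)`. -/
theorem noise2sr_theorem1
    {Ω : Type*} [MeasureSpace Ω] [IsProbabilityMeasure (ℙ : Measure Ω)] {d : ℕ}
    (x n : Ω → Fin d → ℝ) (J : Finset (Fin d))
    (f : ({i // i ∈ J} → ℝ) → ({i // i ∈ Jᶜ} → ℝ))
    (hxi : ∀ i, MemLp (fun ω => x ω i) 2 ℙ)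
    (hni : ∀ i, MemLp (fun ω => n ω i) 2 ℙ)
    (hmean : ∀ i, ∫ ω, n ω i = 0)
    (hpair : ∀ i j, i ≠ j → IndepFun (fun ω => n ω i) (fun ω => n ω j) ℙ)
    (hindep : IndepFun (fun ω => (x ω, fun j : {i // i ∈ J} => n ω j.1))
      (fun ω => fun j : {i // i ∈ Jᶜ} => n ω j.1) ℙ)
    (hf : Measurable f)
    (hfL2 : ∀ i : {i // i ∈ Jᶜ},
      MemLp (fun ω => f (fun j : {i // i ∈ J} => x ω j.1 + n ω j.1) i) 2 ℙ) :
    ∫ ω, ∑ i ∈ Jᶜ.attach,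
        (f (fun j : {i // i ∈ J} => x ω j.1 + n ω j.1) i - (x ω i.1 + n ω i.1)) ^ 2
      = (∫ ω, ∑ i ∈ Jᶜ.attach,
          (f (fun j : {i // i ∈ J} => x ω j.1 + n ω j.1) i - x ω i.1) ^ 2)
        + ∑ i ∈ Jᶜ, variance (fun ω => n ω i) ℙ := by
  classical
  set F : Ω → {i // i ∈ Jᶜ} → ℝ :=
    fun ω => f (fun j : {i // i ∈ J} => x ω j.1 + n ω j.1) with hF
  -- L2 facts
  have hg2 : ∀ i : {i // i ∈ Jᶜ}, MemLp (fun ω => F ω i - x ω i.1) 2 ℙ :=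
    fun i => (hfL2 i).sub (hxi i.1)
  have hy2 : ∀ i : {i // i ∈ Jᶜ}, MemLp (fun ω => F ω i - (x ω i.1 + n ω i.1)) 2 ℙ :=
    fun i => (hfL2 i).sub ((hxi i.1).add (hni i.1))
  -- integrability of cross terms
  have hcross : ∀ i : {i // i ∈ Jᶜ},
      Integrable (fun ω => (F ω i - x ω i.1) * n ω i.1) ℙ := by
    intro i
    have h : MemLp ((fun ω => F ω i - x ω i.1) • (fun ω => n ω i.1)) 1 ℙ :=
      MemLp.smul (hni i.1) (hg2 i)
    rw [memLp_one_iff_integrable] at h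
    exact h
  -- key per-coordinate identity
  have key : ∀ i : {i // i ∈ Jᶜ},
      (∫ ω, (F ω i - (x ω i.1 + n ω i.1)) ^ 2)
        = (∫ ω, (F ω i - x ω i.1) ^ 2) + variance (fun ω => n ω i.1) ℙ := by
    intro i
    -- independence of (F - x_i) and n_i
    have hindepi : IndepFun (fun ω => F ω i - x ω i.1) (fun ω => n ω i.1) ℙ := by
      have hφ : Measurable (fun p : (Fin d → ℝ) × ({j // j ∈ J} → ℝ) =>
          f (fun j : {i // i ∈ J} => p.1 j.1 + p.2 j) i - p.1 i.1) := by
        apply Measurable.sub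
        · exact (measurable_pi_apply i).comp (hf.comp (measurable_pi_lambda _
            (fun j => ((measurable_pi_apply j.1).comp measurable_fst).add
              ((measurable_pi_apply j).comp measurable_snd))))
        · exact (measurable_pi_apply i.1).comp measurable_fst
      have hψ : Measurable (fun v : {j // j ∈ Jᶜ} → ℝ => v i) := measurable_pi_apply i
      exact hindep.comp hφ hψ
    have hmul : (∫ ω, (F ω i - x ω i.1) * n ω i.1) = 0 := by
      have := hindepi.integral_mul_eq_mul_integral (hg2 i).aestronglyMeasurable
        (hni i.1).aestronglyMeasurable
      rw [hmean i.1, mul_zero] at this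
      exact this
    have hvar : variance (fun ω => n ω i.1) ℙ = ∫ ω, (n ω i.1) ^ 2 := by
      rw [variance_eq_sub (hni i.1)]
      simp [hmean i.1]
    have hexp : ∀ ω, (F ω i - (x ω i.1 + n ω i.1)) ^ 2
        = (F ω i - x ω i.1) ^ 2 - 2 * ((F ω i - x ω i.1) * n ω i.1) + (n ω i.1) ^ 2 := by
      intro ω; ring
    calc (∫ ω, (F ω i - (x ω i.1 + n ω i.1)) ^ 2)
        = ∫ ω, ((F ω i - x ω i.1) ^ 2 - 2 * ((F ω i - x ω i.1) * n ω i.1)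
            + (n ω i.1) ^ 2) := by
          exact integral_congr_ae (Filter.EventuallyEq.of_eq (funext hexp))
      _ = (∫ ω, ((F ω i - x ω i.1) ^ 2 - 2 * ((F ω i - x ω i.1) * n ω i.1)))
            + ∫ ω, (n ω i.1) ^ 2 := by
          exact integral_add ((hg2 i).integrable_sq.sub ((hcross i).const_mul 2))
            (hni i.1).integrable_sq
      _ = (∫ ω, (F ω i - x ω i.1) ^ 2) - 2 * (∫ ω, (F ω i - x ω i.1) * n ω i.1)
            + ∫ ω, (n ω i.1) ^ 2 := by
          rw [integral_sub (hg2 i).integrable_sq ((hcross i).const_mul 2),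
            integral_const_mul]
      _ = (∫ ω, (F ω i - x ω i.1) ^ 2) + variance (fun ω => n ω i.1) ℙ := by
          rw [hmul, hvar]; ring
  -- sum everything
  rw [integral_finset_sum _ (fun i _ => (hy2 i).integrable_sq),
    integral_finset_sum _ (fun i _ => (hg2 i).integrable_sq)]
  rw [← Finset.sum_attach Jᶜ (fun i => variance (fun ω => n ω i) ℙ), ← Finset.sum_add_distrib]
  exact Finset.sum_congr rfl (fun i _ => key i)
end

section
/- Let y₁ = x + n₁ and y₂ = x + n₂ where n₁, n₂ are mean-zero, mutually independent given x, with n₂ independent of (x, n₁). Then for any measurable f, E[‖f(y₁) − y₂‖²] = E[‖f(y₁) − x‖²] + E[‖n₂‖²]. In particular, minimizing the Noise2Noise loss E[‖f(y₁) − y₂‖²] over f yields the same minimizer as the supervised loss E[‖f(y₁) − x‖²]. -/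
open MeasureTheory ProbabilityTheory

/-- Noise2Noise: `y₁ = x + n₁`, `y₂ = x + n₂`, with `n₂` mean-zero and
independent of `(x, n₁)`.  For any measurable `f` (with square-integrable output),
`E[‖f(y₁) − y₂‖²] = E[‖f(y₁) − x‖²] + E[‖n₂‖²]`; in particular minimizing the
Noise2Noise loss yields the same minimizer as the supervised loss. -/
theorem noise2noise_identity
    {Ω : Type*} [MeasureSpace Ω] [IsProbabilityMeasure (ℙ : Measure Ω)] {d : ℕ}
    (x n₁ n₂ : Ω → EuclideanSpace ℝ (Fin d))
    (hx : MemLp x 2 ℙ) (hn₁ : MemLp n₁ 2 ℙ) (hn₂ : MemLp n₂ 2 ℙ)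
    (hmean : ∫ ω, n₂ ω = 0)
    (hindep : IndepFun (fun ω => (x ω, n₁ ω)) n₂ ℙ) :
    (∀ f : EuclideanSpace ℝ (Fin d) → EuclideanSpace ℝ (Fin d), Measurable f →
        MemLp (fun ω => f (x ω + n₁ ω)) 2 ℙ →
        ∫ ω, ‖f (x ω + n₁ ω) - (x ω + n₂ ω)‖ ^ 2
          = (∫ ω, ‖f (x ω + n₁ ω) - x ω‖ ^ 2) + ∫ ω, ‖n₂ ω‖ ^ 2)
      ∧ ∀ f f' : EuclideanSpace ℝ (Fin d) → EuclideanSpace ℝ (Fin d),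
          Measurable f → MemLp (fun ω => f (x ω + n₁ ω)) 2 ℙ →
          Measurable f' → MemLp (fun ω => f' (x ω + n₁ ω)) 2 ℙ →
          ((∫ ω, ‖f (x ω + n₁ ω) - (x ω + n₂ ω)‖ ^ 2)
              ≤ ∫ ω, ‖f' (x ω + n₁ ω) - (x ω + n₂ ω)‖ ^ 2
            ↔ (∫ ω, ‖f (x ω + n₁ ω) - x ω‖ ^ 2)
              ≤ ∫ ω, ‖f' (x ω + n₁ ω) - x ω‖ ^ 2) := by
  have sqInt : ∀ (h : Ω → EuclideanSpace ℝ (Fin d)), MemLp h 2 ℙ →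
      Integrable (fun ω => ‖h ω‖ ^ 2) ℙ := by
    intro h hh
    have := hh.integrable_norm_rpow (by norm_num) (by norm_num)
    simpa [ENNReal.toReal_ofNat, Real.rpow_natCast] using this
  have key : ∀ f : EuclideanSpace ℝ (Fin d) → EuclideanSpace ℝ (Fin d), Measurable f →
      MemLp (fun ω => f (x ω + n₁ ω)) 2 ℙ →
      ∫ ω, ‖f (x ω + n₁ ω) - (x ω + n₂ ω)‖ ^ 2
        = (∫ ω, ‖f (x ω + n₁ ω) - x ω‖ ^ 2) + ∫ ω, ‖n₂ ω‖ ^ 2 := by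
    intro f hf hfL
    set g : Ω → EuclideanSpace ℝ (Fin d) := fun ω => f (x ω + n₁ ω) - x ω with hgdef
    have hg : MemLp g 2 ℙ := hfL.sub hx
    have hindg : IndepFun g n₂ ℙ := by
      have hφ : Measurable (fun p : EuclideanSpace ℝ (Fin d) × EuclideanSpace ℝ (Fin d) =>
          f (p.1 + p.2) - p.1) := by
        exact (hf.comp (measurable_fst.add measurable_snd)).sub measurable_fst
      exact hindep.comp hφ measurable_id
    -- coordinatewise facts
    have hgcoord : ∀ i : Fin d, MemLp (fun ω => g ω i) 2 ℙ := fun i =>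
      (EuclideanSpace.proj (𝕜 := ℝ) i).comp_memLp' hg
    have hncoord : ∀ i : Fin d, MemLp (fun ω => n₂ ω i) 2 ℙ := fun i =>
      (EuclideanSpace.proj (𝕜 := ℝ) i).comp_memLp' hn₂
    have hprodInt : ∀ i : Fin d, Integrable (fun ω => g ω i * n₂ ω i) ℙ := by
      intro i
      have : MemLp (fun ω => g ω i • n₂ ω i) 1 ℙ :=
        (haveI : ENNReal.HolderTriple 2 2 1 := ⟨by rw [ENNReal.inv_two_add_inv_two, inv_one]⟩; (hncoord i).smul (hgcoord i))
      simpa [smul_eq_mul] using this.integrable le_rfl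
    have hzero : ∫ ω, (inner ℝ (g ω) (n₂ ω) : ℝ) = 0 := by
      have hrw : ∀ ω, (inner ℝ (g ω) (n₂ ω) : ℝ) = ∑ i : Fin d, g ω i * n₂ ω i := by
        intro ω; simp [PiLp.inner_apply, RCLike.inner_apply, mul_comm]
      simp_rw [hrw]
      rw [integral_finset_sum _ (fun i _ => hprodInt i)]
      refine Finset.sum_eq_zero fun i _ => ?_
      have hind_i : IndepFun (fun ω => g ω i) (fun ω => n₂ ω i) ℙ :=
        hindg.comp ((measurable_pi_apply i).comp (WithLp.measurable_ofLp _ _)) ((measurable_pi_apply i).comp (WithLp.measurable_ofLp _ _))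
      have hmul := hind_i.integral_mul_eq_mul_integral ((hgcoord i).aestronglyMeasurable)
        ((hncoord i).aestronglyMeasurable)
      have hz : (∫ ω, n₂ ω i) = 0 := by
        have := (EuclideanSpace.proj (𝕜 := ℝ) i).integral_comp_comm
          (hn₂.integrable (by norm_num))
        simpa [hmean] using this
      calc ∫ a, g a i * n₂ a i = (∫ ω, g ω i) * ∫ ω, n₂ ω i := by
            simpa [Pi.mul_apply] using hmul
        _ = 0 := by rw [hz, mul_zero]
    have hpt : ∀ ω, ‖f (x ω + n₁ ω) - (x ω + n₂ ω)‖ ^ 2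
        = ‖g ω‖ ^ 2 - 2 * (inner ℝ (g ω) (n₂ ω) : ℝ) + ‖n₂ ω‖ ^ 2 := by
      intro ω
      have h1 : f (x ω + n₁ ω) - (x ω + n₂ ω) = g ω - n₂ ω := by
        simp only [hgdef]; abel
      rw [h1, norm_sub_sq_real]
    have hgInt := sqInt g hg
    have hnInt := sqInt n₂ hn₂
    have hinnerInt : Integrable (fun ω => (inner ℝ (g ω) (n₂ ω) : ℝ)) ℙ := by
      have hrw : (fun ω => (inner ℝ (g ω) (n₂ ω) : ℝ))
          = fun ω => ∑ i : Fin d, g ω i * n₂ ω i := by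
        funext ω; simp [PiLp.inner_apply, RCLike.inner_apply, mul_comm]
      rw [hrw]
      exact integrable_finset_sum _ fun i _ => hprodInt i
    calc ∫ ω, ‖f (x ω + n₁ ω) - (x ω + n₂ ω)‖ ^ 2
        = ∫ ω, (‖g ω‖ ^ 2 - 2 * (inner ℝ (g ω) (n₂ ω) : ℝ) + ‖n₂ ω‖ ^ 2) := by
          exact integral_congr_ae (Filter.Eventually.of_forall hpt)
      _ = (∫ ω, (‖g ω‖ ^ 2 - 2 * (inner ℝ (g ω) (n₂ ω) : ℝ))) + ∫ ω, ‖n₂ ω‖ ^ 2 :=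
          integral_add (hgInt.sub (hinnerInt.const_mul 2)) hnInt
      _ = ((∫ ω, ‖g ω‖ ^ 2) - ∫ ω, 2 * (inner ℝ (g ω) (n₂ ω) : ℝ)) + ∫ ω, ‖n₂ ω‖ ^ 2 := by
          rw [integral_sub hgInt (hinnerInt.const_mul 2)]
      _ = (∫ ω, ‖g ω‖ ^ 2) + ∫ ω, ‖n₂ ω‖ ^ 2 := by
          rw [integral_const_mul, hzero]; ring
  refine ⟨key, fun f f' hf hfL hf' hfL' => ?_⟩
  rw [key f hf hfL, key f' hf' hfL']
  exact add_le_add_iff_right _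
end
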